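/- Let n ≥ 1, let d = 2n and let s₀ = (0, n−1) ∈ ℤ². Then for every i ∈ ℤ/2nℤ, the Kashiwara operator ẽ_i (defined with respect to d and the charge s₀) annihilates both the bipartition 1^{2n}.∅ and the bipartition ∅.1^{2n}: ẽ_i(1^{2n}.∅) = 0 and ẽ_i(∅.1^{2n}) = 0. -/

import Mathlib

open scoped Classical

noncomputable section

/-- A partition: an antitone, eventually zero sequence of natural numbers.
`parts k` is the `(k+1)`-st part `λ_{k+1}`. -/
structure SeqPartition where
  parts : ℕ → ℕ
  antitone' : Antitone parts
  exists_zero : ∃ N, parts N = 0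

namespace SeqPartition

lemma sorted_getD_antitone {l : List ℕ} (h : l.Pairwise (· ≥ ·)) :
    Antitone (fun k => l.getD k 0) := by
  intro i j hij
  simp only
  rcases lt_or_ge j l.length with hj | hj
  · have hi : i < l.length := lt_of_le_of_lt hij hj
    rw [List.getD_eq_getElem l 0 hj, List.getD_eq_getElem l 0 hi]
    rcases eq_or_lt_of_le hij with rfl | hlt
    · exact le_rfl
    · exact List.pairwise_iff_getElem.mp h i j hi hj hlt
  · rw [List.getD_eq_default l 0 hj]
    exact Nat.zero_le _

/-- The partition whose multiset of (nonzero) parts is the multiset of nonzero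
elements of `m`. -/
def ofMul (m : Multiset ℕ) : SeqPartition where
  parts := fun k => ((m.sort (· ≤ ·)).reverse).getD k 0
  antitone' := by
    apply sorted_getD_antitone
    rw [List.pairwise_reverse]
    exact Multiset.pairwise_sort m (· ≤ ·)
  exists_zero := ⟨((m.sort (· ≤ ·)).reverse).length, List.getD_eq_default _ _ le_rfl⟩

/-- The size `|λ|` of a partition: the sum of its parts. -/
def size (p : SeqPartition) : ℕ := ∑ i ∈ Finset.range (Nat.find p.exists_zero), p.parts i

lemma finite_gt (p : SeqPartition) (k : ℕ) : {i : ℕ | k < p.parts i}.Finite := by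
  obtain ⟨N, hN⟩ := p.exists_zero
  apply (Set.finite_Iio N).subset
  intro i hi
  simp only [Set.mem_setOf_eq] at hi
  by_contra hc
  simp only [Set.mem_Iio, not_lt] at hc
  have := p.antitone' hc
  omega

/-- The conjugate (transpose) partition. -/
def conj (p : SeqPartition) : SeqPartition where
  parts := fun k => {i : ℕ | k < p.parts i}.ncard
  antitone' := fun a b hab =>
    Set.ncard_le_ncard (fun i hi => lt_of_le_of_lt hab hi) (p.finite_gt a)
  exists_zero := by
    refine ⟨p.parts 0, ?_⟩
    have h : {i : ℕ | p.parts 0 < p.parts i} = ∅ := by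
      ext i
      simp only [Set.mem_setOf_eq, Set.mem_empty_iff_false, iff_false, not_lt]
      exact p.antitone' (Nat.zero_le i)
    show {i : ℕ | p.parts 0 < p.parts i}.ncard = 0
    rw [h, Set.ncard_empty]

/-- The 180°-rotation of the complement of `p` inside the rectangle with
`rows` rows of length `c`: the partition `(c - p_rows, c - p_{rows-1}, …, c - p₁)`. -/
def rotCompl (c rows : ℕ) (p : SeqPartition) : SeqPartition where
  parts := fun k => if k < rows then c - p.parts (rows - 1 - k) else 0
  antitone' := by
    intro a b hab
    by_cases hb : b < rows
    · have ha : a < rows := lt_of_le_of_lt hab hb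
      simp only [if_pos hb, if_pos ha]
      exact Nat.sub_le_sub_left (p.antitone' (by omega)) c
    · simp only [if_neg hb]
      exact Nat.zero_le _
  exists_zero := ⟨rows, by simp⟩

end SeqPartition

/-- A bipartition: a pair of partitions. -/
abbrev Bipartition := SeqPartition × SeqPartition

/-- The size of a bipartition. -/
def Bipartition.size (l : Bipartition) : ℕ := l.1.size + l.2.size

/-- The bipartition whose components have parts the multisets `a` and `b`. -/
def bip (a b : Multiset ℕ) : Bipartition := (SeqPartition.ofMul a, SeqPartition.ofMul b)

/-- The multiset of parts of the partition `a 1^b` (one part `a`, then `b` parts `1`). -/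
def hook (a b : ℕ) : Multiset ℕ := a ::ₘ Multiset.replicate b 1

/-- The charged β-set of a partition, as a sequence:
`betaSet p s i = λ_{i+1} + s - (i+1) + 1`. -/
def betaSet (p : SeqPartition) (s : ℤ) (i : ℕ) : ℤ := (p.parts i : ℤ) + s - i

/-- The charged symbol of a bipartition with charge `σ`, as a pair of subsets of `ℤ`. -/
def symbolOf (l : Bipartition) (σ : ℤ × ℤ) : Set ℤ × Set ℤ :=
  (Set.range (betaSet l.1 σ.1), Set.range (betaSet l.2 σ.2))

/-- The charge `σ_t`. -/
def sigmaT (t : ℕ) : ℤ × ℤ :=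
  if Even t then ((t : ℤ), -1 - (t : ℤ)) else (-1 - (t : ℤ), (t : ℤ))

/-- The trivial symbol `({0,-1,-2,…},{-1,-2,-3,…})`, the symbol of the empty
bipartition with charge `σ₀ = (0,-1)`. -/
def trivialSymbol : Set ℤ × Set ℤ := ({z : ℤ | z ≤ 0}, {z : ℤ | z ≤ -1})

/-- Removing one `n`-co-hook from the symbol `Λ`, yielding `Λ'`: remove `x+n` from one
row, adjoin `x` to the other row, and exchange the two rows. -/
def CohookStep (n : ℕ) (Λ Λ' : Set ℤ × Set ℤ) : Prop :=
  (∃ x : ℤ, x + n ∈ Λ.1 ∧ x ∉ Λ.2 ∧ Λ' = (Λ.2 ∪ {x}, Λ.1 \ {x + n})) ∨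
  (∃ x : ℤ, x + n ∈ Λ.2 ∧ x ∉ Λ.1 ∧ Λ' = (Λ.2 \ {x + n}, Λ.1 ∪ {x}))

/-- `C` is the `n`-co-core of `Λ`: it is obtained from `Λ` by recursively removing
`n`-co-hooks, and no further `n`-co-hook can be removed. -/
def IsCocore (n : ℕ) (Λ C : Set ℤ × Set ℤ) : Prop :=
  Relation.ReflTransGen (CohookStep n) Λ C ∧ ∀ C', ¬ CohookStep n C C'

/-- Number of entries of the charged β-set of `p` that are `≥ α` (with multiplicity). -/
def betaCountGE (p : SeqPartition) (s α : ℤ) : ℕ := Nat.card {i : ℕ // α ≤ betaSet p s i}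

/-- Number of entries `≥ α`, with multiplicity, of the multiset union of the two rows
of the symbol of `l` with charge `σ`. -/
def symCountGE (l : Bipartition) (σ : ℤ × ℤ) (α : ℤ) : ℕ :=
  betaCountGE l.1 σ.1 α + betaCountGE l.2 σ.2 α

/-- The composition `ϖ_Λ` of the symbol of `l` with charge `σ`: `comp l σ k` is the
`(k+1)`-st largest entry (with multiplicity) of the multiset union of the two rows. -/
def comp (l : Bipartition) (σ : ℤ × ℤ) (k : ℕ) : ℤ :=
  sSup {z : ℤ | k + 1 ≤ symCountGE l σ z}

/-- All partial sums of the composition of the symbol `(l,σ)` are bounded by those of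
`(m,τ)`. -/
def DomLE (l : Bipartition) (σ : ℤ × ℤ) (m : Bipartition) (τ : ℤ × ℤ) : Prop :=
  ∀ j : ℕ, ∑ k ∈ Finset.range j, comp l σ k ≤ ∑ k ∈ Finset.range j, comp m τ k

/-- Strict dominance `Λ ⊲ Λ'` of symbols: the compositions differ and all partial sums
of the first are bounded by those of the second. -/
def DomLT (l : Bipartition) (σ : ℤ × ℤ) (m : Bipartition) (τ : ℤ × ℤ) : Prop :=
  comp l σ ≠ comp m τ ∧ DomLE l σ m τ

/-- A box `(x, y, j)` (0-indexed row `x`, 0-indexed column `y`, component `j`: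
`j = 0` is the first component, `j = 1` the second). -/
abbrev Box := ℕ × ℕ × Fin 2

/-- The component of a bipartition selected by `j : Fin 2`. -/
def Bipartition.partsOf (l : Bipartition) (j : Fin 2) : SeqPartition := if j = 0 then l.1 else l.2

/-- Membership of a box in the Young diagram of a bipartition. -/
def MemY (l : Bipartition) (b : Box) : Prop := b.2.1 < (l.partsOf b.2.2).parts b.1

/-- The entry of the charge `σ` corresponding to component `j`. -/
def chargeOf (σ : ℤ × ℤ) (j : Fin 2) : ℤ := if j = 0 then σ.1 else σ.2

/-- The charged content `co^σ(b) = y - x + σ_j` of a box. -/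
def content (σ : ℤ × ℤ) (b : Box) : ℤ := (b.2.1 : ℤ) - (b.1 : ℤ) + chargeOf σ b.2.2

/-- `j(b) ∈ {1,2}`: the component of a box, numbered 1 or 2. -/
def jval (b : Box) : ℕ := (b.2.2 : ℕ) + 1

/-- The counting function of the Dunkl–Griffeth order. -/
def dgCount (l : Bipartition) (s : ℤ × ℤ) (d : ℕ) (α : ℝ) (j : ℕ) : ℕ :=
  Nat.card {b : Box // MemY l b ∧
    (α < (content s b : ℝ) - (jval b : ℝ) * (d : ℝ) / 2 ∨
      ((content s b : ℝ) - (jval b : ℝ) * (d : ℝ) / 2 = α ∧ jval b ≤ j))}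

/-- The Dunkl–Griffeth order `λ ⪯_s μ` (with respect to `d`). -/
def DGLE (l m : Bipartition) (s : ℤ × ℤ) (d : ℕ) : Prop :=
  ∀ (α : ℝ), ∀ j ∈ ({1, 2} : Set ℕ), dgCount l s d α j ≤ dgCount m s d α j

/-- A box of the extended Young diagram: rows are infinite to the left, so the column
coordinate is an integer.  `(x, y, j)` is the box in (0-indexed) row `x`, with integer
column coordinate `y` (`y = 0` is the first column), in component `j`. -/
abbrev ExtBox := ℕ × ℤ × Fin 2

/-- Membership in the extended Young diagram of a bipartition. -/
def MemExtY (l : Bipartition) (b : ExtBox) : Prop :=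
  b.2.1 < ((l.partsOf b.2.2).parts b.1 : ℤ)

/-- The charged content of an extended box. -/
def contentExt (σ : ℤ × ℤ) (b : ExtBox) : ℤ := b.2.1 - (b.1 : ℤ) + chargeOf σ b.2.2

/-- `b` is a removable box of the bipartition `l`. -/
def Removable (l : Bipartition) (b : Box) : Prop :=
  (l.partsOf b.2.2).parts b.1 = b.2.1 + 1 ∧ (l.partsOf b.2.2).parts (b.1 + 1) ≤ b.2.1

/-- `b` is an addable box of the bipartition `l`. -/
def Addable (l : Bipartition) (b : Box) : Prop :=
  (l.partsOf b.2.2).parts b.1 = b.2.1 ∧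
    (b.1 = 0 ∨ b.2.1 + 1 ≤ (l.partsOf b.2.2).parts (b.1 - 1))

/-- The order in which boxes are listed in the `i`-word: increasing charged content,
a component-2 box preceding a component-1 box of equal charged content. -/
def BoxLT (σ : ℤ × ℤ) (b b' : Box) : Prop :=
  content σ b < content σ b' ∨
    (content σ b = content σ b' ∧ b.2.2 = 1 ∧ b'.2.2 = 0)

/-- `L` is the list of boxes underlying the `i`-word of `(l, σ)` with respect to `d`:
it lists, in increasing order, exactly the addable and removable boxes of `l` whose
charged content is congruent to `i` modulo `d`. -/
def IsIWord (l : Bipartition) (σ : ℤ × ℤ) (d : ℕ) (i : ZMod d) (L : List Box) : Prop :=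
  L.Pairwise (BoxLT σ) ∧
    ∀ b : Box, b ∈ L ↔ ((Addable l b ∨ Removable l b) ∧ ((content σ b : ZMod d) = i))

/-- The sign of a box in the `i`-word: `true` (`+`) for addable, `false` (`−`) for
removable boxes. -/
def signOf (l : Bipartition) (b : Box) : Bool := if Addable l b then true else false

/-- One reduction step on words: delete an adjacent pair `−+`. -/
def RedStep (w w' : List Bool) : Prop :=
  ∃ u v : List Bool, w = u ++ false :: true :: v ∧ w' = u ++ v

/-- `ẽ_i l = 0`: the reduced `i`-word of `(l, σ)` contains no `−`, i.e. the `i`-word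
reduces to a word consisting only of `+`'s. -/
def AnnihilatedE (l : Bipartition) (σ : ℤ × ℤ) (d : ℕ) (i : ZMod d) : Prop :=
  ∃ L : List Box, IsIWord l σ d i L ∧
    ∃ a : ℕ, Relation.ReflTransGen RedStep (L.map (signOf l)) (List.replicate a true)

/-- `q` is obtained from the partition `p` by adding one box. -/
def PCovers (p q : SeqPartition) : Prop :=
  ∃ x : ℕ, q.parts x = p.parts x + 1 ∧ ∀ y : ℕ, y ≠ x → q.parts y = p.parts y

/-- `m` is obtained from the bipartition `l` by adding one box to its Young diagram. -/
def BipCovers (l m : Bipartition) : Prop :=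
  (PCovers l.1 m.1 ∧ m.2 = l.2) ∨ (m.1 = l.1 ∧ PCovers l.2 m.2)

/-- `A(l) = Σ_μ μ`, the sum over all bipartitions obtained from `l` by adding one box,
as an element of the group of `ℤ`-valued functions on bipartitions. -/
def addB (l : Bipartition) : Bipartition → ℤ := fun m => if BipCovers l m then 1 else 0

/-- The projection `π_S` onto the span of the bipartitions lying in `S`. -/
def projS (S : Set Bipartition) (f : Bipartition → ℤ) : Bipartition → ℤ :=
  fun m => if m ∈ S then f m else 0

/-- The basis element of `ℤ[BP]` corresponding to a bipartition. -/
def deltaB (l : Bipartition) : Bipartition → ℤ := fun m => if m = l then 1 else 0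

/-- The bipartitions of `2n` labelling the principal-series unipotent characters in
the principal `Φ_{2n}`-block. -/
def PS (n : ℕ) : Set Bipartition :=
  {l | (∃ i j : ℕ, 0 < i ∧ i < n ∧ j ≤ n ∧
          l = bip (hook (n - i) j) (hook (n - j + 1) (i - 1))) ∨
       (∃ j : ℕ, j < 2 * n ∧ l = bip (hook (2 * n - j) j) 0) ∨
       (∃ i : ℕ, 0 < i ∧ i ≤ 2 * n ∧ l = bip 0 (hook (2 * n - i + 1) (i - 1)))}

/-- The bipartitions of `2n-2` labelling the `B₂`-series unipotent characters in the
principal `Φ_{2n}`-block: `2^i 1^{j-i-1} . (n-i-1)(n-j)` for `0 ≤ i < j ≤ n`. -/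
def LB2 (n : ℕ) : Set Bipartition :=
  {l | ∃ i j : ℕ, i < j ∧ j ≤ n ∧
        l = bip (Multiset.replicate i 2 + Multiset.replicate (j - i - 1) 1)
                {n - i - 1, n - j}}

/-- The bipartitions of `2n-6` labelling the `B₆`-series unipotent characters in the
principal `Φ_{2n}`-block: `(n-i-2)(n-j-1) . 2^{i-1} 1^{j-i-1}` for `0 < i < j < n`. -/
def LB6 (n : ℕ) : Set Bipartition :=
  {l | ∃ i j : ℕ, 0 < i ∧ i < j ∧ j < n ∧
        l = bip {n - i - 2, n - j - 1}
                (Multiset.replicate (i - 1) 2 + Multiset.replicate (j - i - 1) 1)}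

end

section Aux

lemma parts_ofMul_replicate (m k : ℕ) :
    (SeqPartition.ofMul (Multiset.replicate m 1)).parts k = if k < m then 1 else 0 := by
  have hs : Multiset.sort (Multiset.replicate m 1) (· ≤ ·) = List.replicate m 1 := by
    apply List.perm_replicate.mp
    rw [← Multiset.coe_eq_coe, Multiset.sort_eq, Multiset.coe_replicate]
  unfold SeqPartition.ofMul
  simp only [hs, List.reverse_replicate]
  rcases lt_or_ge k m with h | h
  · rw [List.getD_eq_getElem _ 0 (by simpa using h), List.getElem_replicate, if_pos h]
  · rw [List.getD_eq_default _ _ (by simpa using h), if_neg (by omega)]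

lemma parts_ofMul_zero (k : ℕ) : (SeqPartition.ofMul 0).parts k = 0 := by
  unfold SeqPartition.ofMul
  simp [Multiset.sort_zero]

lemma zmod_eq_of (m : ℕ) {a b : ℤ} (h : (m : ℤ) ∣ (b - a)) :
    ((a : ZMod m) = (b : ZMod m)) :=
  (ZMod.intCast_eq_intCast_iff a b m).mpr (Int.modEq_iff_dvd.mpr h)

lemma zmod_inj (m : ℕ) {a b : ℤ} (h : ((a : ZMod m) = (b : ZMod m)))
    (hb : |a - b| < (m : ℤ)) : a = b := by
  have h2 := ((ZMod.intCast_eq_intCast_iff a b m).mp h).dvd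
  have h3 := Int.eq_zero_of_abs_lt_dvd h2 (by rwa [abs_sub_comm])
  omega

end Aux
lemma classify1 (n : ℕ) (hn : 1 ≤ n) (l : Bipartition)
    (hA : ∀ k, (l.partsOf 0).parts k = if k < 2*n then 1 else 0)
    (hB : ∀ k, (l.partsOf 1).parts k = 0)
    (b : Box) :
    (Addable l b ∨ Removable l b) ↔
      (b = (2*n, 0, (0:Fin 2)) ∨ b = (2*n-1, 0, (0:Fin 2)) ∨
       b = (0, 1, (0:Fin 2)) ∨ b = (0, 0, (1:Fin 2))) := by
  obtain ⟨x, y, j⟩ := b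
  fin_cases j <;>
    simp only [Fin.mk_zero, Fin.mk_one, Addable, Removable, hA, hB, Prod.mk.injEq,
      show ((0:Fin 2) = 0) ↔ True from by simp, show ((1:Fin 2) = 1) ↔ True from by simp,
      show ((0:Fin 2) = 1) ↔ False from by simp, show ((1:Fin 2) = 0) ↔ False from by simp,
      and_true, and_false, or_false, false_or]
  · split_ifs <;> (try simp only [false_and, true_and, and_true, and_false, or_false, false_or]) <;> omega
  · omega

lemma classify2 (n : ℕ) (hn : 1 ≤ n) (l : Bipartition)
    (hA : ∀ k, (l.partsOf 0).parts k = 0)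
    (hB : ∀ k, (l.partsOf 1).parts k = if k < 2*n then 1 else 0)
    (b : Box) :
    (Addable l b ∨ Removable l b) ↔
      (b = (2*n, 0, (1:Fin 2)) ∨ b = (2*n-1, 0, (1:Fin 2)) ∨
       b = (0, 1, (1:Fin 2)) ∨ b = (0, 0, (0:Fin 2))) := by
  obtain ⟨x, y, j⟩ := b
  fin_cases j <;>
    simp only [Fin.mk_zero, Fin.mk_one, Addable, Removable, hA, hB, Prod.mk.injEq,
      show ((0:Fin 2) = 0) ↔ True from by simp, show ((1:Fin 2) = 1) ↔ True from by simp,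
      show ((0:Fin 2) = 1) ↔ False from by simp, show ((1:Fin 2) = 0) ↔ False from by simp,
      and_true, and_false, or_false, false_or]
  · omega
  · split_ifs <;> (try simp only [false_and, true_and, and_true, and_false, or_false, false_or]) <;> omega
lemma ann1 (n : ℕ) (hn : 1 ≤ n) (i : ZMod (2*n)) :
    AnnihilatedE (bip (Multiset.replicate (2 * n) 1) 0) (0, (n : ℤ) - 1) (2 * n) i := by
  set σ : ℤ × ℤ := ((0:ℤ), (n:ℤ) - 1) with hσ
  set l : Bipartition := bip (Multiset.replicate (2 * n) 1) 0 with hl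
  have hA : ∀ k, (l.partsOf 0).parts k = if k < 2*n then 1 else 0 := fun k => by
    simp [hl, Bipartition.partsOf, bip, parts_ofMul_replicate]
  have hB : ∀ k, (l.partsOf 1).parts k = 0 := fun k => by
    simp [hl, Bipartition.partsOf, bip, parts_ofMul_zero,
      show ((1:Fin 2) = 0) ↔ False from by simp]
  have hv2 : content σ (2*n, 0, (0:Fin 2)) = -(2*(n:ℤ)) := by
    simp [content, chargeOf, hσ]
  have hvR : content σ (2*n-1, 0, (0:Fin 2)) = 1 - 2*(n:ℤ) := by
    simp [content, chargeOf, hσ]; omega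
  have hv1 : content σ (0, 1, (0:Fin 2)) = 1 := by
    simp [content, chargeOf, hσ]
  have hv3 : content σ (0, 0, (1:Fin 2)) = (n:ℤ) - 1 := by
    simp [content, chargeOf, hσ, show ((1:Fin 2) = 0) ↔ False from by simp]
  have key2 : ((content σ (2*n, 0, (0:Fin 2)) : ZMod (2*n))) = (((0:ℤ)) : ZMod (2*n)) := by
    rw [hv2]; exact zmod_eq_of _ ⟨1, by push_cast; ring⟩
  have keyR : ((content σ (2*n-1, 0, (0:Fin 2)) : ZMod (2*n))) = (((1:ℤ)) : ZMod (2*n)) := by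
    rw [hvR]; exact zmod_eq_of _ ⟨1, by push_cast; ring⟩
  have key1 : ((content σ (0, 1, (0:Fin 2)) : ZMod (2*n))) = (((1:ℤ)) : ZMod (2*n)) := by
    rw [hv1]
  have key3 : ((content σ (0, 0, (1:Fin 2)) : ZMod (2*n))) = (((n:ℤ)-1 : ℤ) : ZMod (2*n)) := by
    rw [hv3]
  have hAdd2 : Addable l (2*n, 0, (0:Fin 2)) := by
    constructor
    · show (l.partsOf 0).parts (2*n) = 0
      rw [hA]; split_ifs <;> omega
    · refine Or.inr ?_
      show 0 + 1 ≤ (l.partsOf 0).parts (2*n - 1)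
      rw [hA]; split_ifs <;> omega
  have hAdd1 : Addable l (0, 1, (0:Fin 2)) := by
    constructor
    · show (l.partsOf 0).parts 0 = 1
      rw [hA]; split_ifs <;> omega
    · exact Or.inl rfl
  have hAdd3 : Addable l (0, 0, (1:Fin 2)) := by
    constructor
    · show (l.partsOf 1).parts 0 = 0
      rw [hB]
    · exact Or.inl rfl
  have hRem : Removable l (2*n-1, 0, (0:Fin 2)) := by
    constructor
    · show (l.partsOf 0).parts (2*n-1) = 0 + 1
      rw [hA]; split_ifs <;> omega
    · show (l.partsOf 0).parts (2*n-1+1) ≤ 0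
      rw [hA]; split_ifs <;> omega
  have hNAddR : ¬ Addable l (2*n-1, 0, (0:Fin 2)) := by
    rintro ⟨h1, -⟩
    rw [show (l.partsOf (((2*n-1 : ℕ), (0:ℕ), (0:Fin 2)) : Box).2.2).parts
          (((2*n-1 : ℕ), (0:ℕ), (0:Fin 2)) : Box).1
        = (l.partsOf 0).parts (2*n-1) from rfl, hA] at h1
    split_ifs at h1 <;> omega
  have hs2 : signOf l (2*n, 0, (0:Fin 2)) = true := by unfold signOf; rw [if_pos hAdd2]
  have hs1 : signOf l (0, 1, (0:Fin 2)) = true := by unfold signOf; rw [if_pos hAdd1]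
  have hs3 : signOf l (0, 0, (1:Fin 2)) = true := by unfold signOf; rw [if_pos hAdd3]
  have hsR : signOf l (2*n-1, 0, (0:Fin 2)) = false := by unfold signOf; rw [if_neg hNAddR]
  have habs : ∀ a b : ℤ, a - b < (2*n:ℕ) → b - a < (2*n:ℕ) → |a - b| < ((2*n:ℕ):ℤ) := by
    intro a b h1 h2; rw [abs_sub_lt_iff]; exact ⟨h1, h2⟩
  unfold AnnihilatedE
  by_cases h1 : i = (((1:ℤ)) : ZMod (2*n))
  · by_cases hn2 : n = 2
    · refine ⟨[(2*n-1, 0, (0:Fin 2)), (0, 0, (1:Fin 2)), (0, 1, (0:Fin 2))], ⟨?_, ?_⟩, 1, ?_⟩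
      · refine List.pairwise_cons.mpr ⟨?_, List.pairwise_cons.mpr ⟨?_, List.pairwise_singleton _ _⟩⟩
        · intro b hb
          rcases List.mem_cons.mp hb with rfl | hb
          · exact Or.inl (by rw [hvR, hv3]; omega)
          · rw [List.mem_singleton] at hb; subst hb
            exact Or.inl (by rw [hvR, hv1]; omega)
        · intro b hb; rw [List.mem_singleton] at hb; subst hb
          exact Or.inr ⟨by rw [hv3, hv1]; omega, rfl, rfl⟩
      · intro b
        rw [List.mem_cons, List.mem_cons, List.mem_singleton, classify1 n hn l hA hB]
        constructor
        · rintro (rfl | rfl | rfl)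
          · exact ⟨Or.inr (Or.inl rfl), keyR.trans h1.symm⟩
          · refine ⟨Or.inr (Or.inr (Or.inr rfl)), ?_⟩
            rw [key3, h1, hn2]; norm_num
          · exact ⟨Or.inr (Or.inr (Or.inl rfl)), key1.trans h1.symm⟩
        · rintro ⟨(rfl | rfl | rfl | rfl), hcl⟩
          · exfalso
            rw [key2, h1] at hcl
            have := zmod_inj (2*n) hcl (habs 0 1 (by omega) (by omega))
            omega
          · exact Or.inl rfl
          · exact Or.inr (Or.inr rfl)
          · exact Or.inr (Or.inl rfl)
      · rw [show [((2*n-1 : ℕ), (0:ℕ), (0:Fin 2)), ((0:ℕ), (0:ℕ), (1:Fin 2)),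
            ((0:ℕ), (1:ℕ), (0:Fin 2))].map (signOf l) = [false, true, true] from by
          rw [List.map_cons, List.map_cons, List.map_cons, List.map_nil, hsR, hs3, hs1]]
        exact Relation.ReflTransGen.single ⟨[], [true], rfl, rfl⟩
    · refine ⟨[(2*n-1, 0, (0:Fin 2)), (0, 1, (0:Fin 2))], ⟨?_, ?_⟩, 0, ?_⟩
      · refine List.pairwise_cons.mpr ⟨?_, List.pairwise_singleton _ _⟩
        intro b hb; rw [List.mem_singleton] at hb; subst hb
        exact Or.inl (by rw [hvR, hv1]; omega)
      · intro b
        rw [List.mem_cons, List.mem_singleton, classify1 n hn l hA hB]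
        constructor
        · rintro (rfl | rfl)
          · exact ⟨Or.inr (Or.inl rfl), keyR.trans h1.symm⟩
          · exact ⟨Or.inr (Or.inr (Or.inl rfl)), key1.trans h1.symm⟩
        · rintro ⟨(rfl | rfl | rfl | rfl), hcl⟩
          · exfalso
            rw [key2, h1] at hcl
            have := zmod_inj (2*n) hcl (habs 0 1 (by omega) (by omega))
            omega
          · exact Or.inl rfl
          · exact Or.inr rfl
          · exfalso
            rw [key3, h1] at hcl
            have := zmod_inj (2*n) hcl (habs ((n:ℤ)-1) 1 (by omega) (by omega))
            omega
      · rw [show [((2*n-1 : ℕ), (0:ℕ), (0:Fin 2)), ((0:ℕ), (1:ℕ), (0:Fin 2))].map (signOf l)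
            = [false, true] from by rw [List.map_cons, List.map_cons, List.map_nil, hsR, hs1]]
        exact Relation.ReflTransGen.single ⟨[], [], rfl, rfl⟩
  · by_cases h0 : i = (((0:ℤ)) : ZMod (2*n))
    · by_cases hn1 : n = 1
      · refine ⟨[(2*n, 0, (0:Fin 2)), (0, 0, (1:Fin 2))], ⟨?_, ?_⟩, 2, ?_⟩
        · refine List.pairwise_cons.mpr ⟨?_, List.pairwise_singleton _ _⟩
          intro b hb; rw [List.mem_singleton] at hb; subst hb
          exact Or.inl (by rw [hv2, hv3]; omega)
        · intro b
          rw [List.mem_cons, List.mem_singleton, classify1 n hn l hA hB]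
          constructor
          · rintro (rfl | rfl)
            · exact ⟨Or.inl rfl, key2.trans h0.symm⟩
            · refine ⟨Or.inr (Or.inr (Or.inr rfl)), ?_⟩
              rw [key3, h0, hn1]; norm_num
          · rintro ⟨(rfl | rfl | rfl | rfl), hcl⟩
            · exact Or.inl rfl
            · exact absurd (keyR.symm.trans hcl).symm h1
            · exact absurd (key1.symm.trans hcl).symm h1
            · exact Or.inr rfl
        · rw [show [((2*n : ℕ), (0:ℕ), (0:Fin 2)), ((0:ℕ), (0:ℕ), (1:Fin 2))].map (signOf l)
              = [true, true] from by rw [List.map_cons, List.map_cons, List.map_nil, hs2, hs3]]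
          exact Relation.ReflTransGen.refl
      · refine ⟨[(2*n, 0, (0:Fin 2))], ⟨List.pairwise_singleton _ _, ?_⟩, 1, ?_⟩
        · intro b
          rw [List.mem_singleton, classify1 n hn l hA hB]
          constructor
          · rintro rfl
            exact ⟨Or.inl rfl, key2.trans h0.symm⟩
          · rintro ⟨(rfl | rfl | rfl | rfl), hcl⟩
            · rfl
            · exact absurd (keyR.symm.trans hcl).symm h1
            · exact absurd (key1.symm.trans hcl).symm h1
            · exfalso
              rw [key3, h0] at hcl
              have := zmod_inj (2*n) hcl (habs ((n:ℤ)-1) 0 (by omega) (by omega))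
              omega
        · rw [show [((2*n : ℕ), (0:ℕ), (0:Fin 2))].map (signOf l) = [true] from by
            rw [List.map_cons, List.map_nil, hs2]]
          exact Relation.ReflTransGen.refl
    · by_cases h3 : i = (((n:ℤ)-1 : ℤ) : ZMod (2*n))
      · refine ⟨[(0, 0, (1:Fin 2))], ⟨List.pairwise_singleton _ _, ?_⟩, 1, ?_⟩
        · intro b
          rw [List.mem_singleton, classify1 n hn l hA hB]
          constructor
          · rintro rfl
            exact ⟨Or.inr (Or.inr (Or.inr rfl)), key3.trans h3.symm⟩
          · rintro ⟨(rfl | rfl | rfl | rfl), hcl⟩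
            · exact absurd (key2.symm.trans hcl).symm h0
            · exact absurd (keyR.symm.trans hcl).symm h1
            · exact absurd (key1.symm.trans hcl).symm h1
            · rfl
        · rw [show [((0:ℕ), (0:ℕ), (1:Fin 2))].map (signOf l) = [true] from by
            rw [List.map_cons, List.map_nil, hs3]]
          exact Relation.ReflTransGen.refl
      · refine ⟨[], ⟨List.Pairwise.nil, ?_⟩, 0, Relation.ReflTransGen.refl⟩
        intro b
        rw [classify1 n hn l hA hB]
        simp only [List.not_mem_nil, false_iff]
        rintro ⟨(rfl | rfl | rfl | rfl), hcl⟩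
        · exact absurd (key2.symm.trans hcl).symm h0
        · exact absurd (keyR.symm.trans hcl).symm h1
        · exact absurd (key1.symm.trans hcl).symm h1
        · exact absurd (key3.symm.trans hcl).symm h3
lemma ann2 (n : ℕ) (hn : 1 ≤ n) (i : ZMod (2*n)) :
    AnnihilatedE (bip 0 (Multiset.replicate (2 * n) 1)) (0, (n : ℤ) - 1) (2 * n) i := by
  set σ : ℤ × ℤ := ((0:ℤ), (n:ℤ) - 1) with hσ
  set l : Bipartition := bip 0 (Multiset.replicate (2 * n) 1) with hl
  have hA : ∀ k, (l.partsOf 0).parts k = 0 := fun k => by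
    simp [hl, Bipartition.partsOf, bip, parts_ofMul_zero]
  have hB : ∀ k, (l.partsOf 1).parts k = if k < 2*n then 1 else 0 := fun k => by
    simp [hl, Bipartition.partsOf, bip, parts_ofMul_replicate,
      show ((1:Fin 2) = 0) ↔ False from by simp]
  have hfin : ((1:Fin 2) = 0) ↔ False := by simp
  have hv0 : content σ (0, 0, (0:Fin 2)) = 0 := by
    simp [content, chargeOf, hσ]
  have hvR : content σ (2*n-1, 0, (1:Fin 2)) = -(n:ℤ) := by
    simp [content, chargeOf, hσ, hfin]; omega
  have hv1 : content σ (0, 1, (1:Fin 2)) = (n:ℤ) := by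
    simp [content, chargeOf, hσ, hfin]
  have hv2 : content σ (2*n, 0, (1:Fin 2)) = -(n:ℤ)-1 := by
    simp [content, chargeOf, hσ, hfin]; push_cast; ring
  have key0 : ((content σ (0, 0, (0:Fin 2)) : ZMod (2*n))) = (((0:ℤ)) : ZMod (2*n)) := by
    rw [hv0]
  have keyR : ((content σ (2*n-1, 0, (1:Fin 2)) : ZMod (2*n))) = (((n:ℤ) : ℤ) : ZMod (2*n)) := by
    rw [hvR]; exact zmod_eq_of _ ⟨1, by push_cast; ring⟩
  have key1 : ((content σ (0, 1, (1:Fin 2)) : ZMod (2*n))) = (((n:ℤ) : ℤ) : ZMod (2*n)) := by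
    rw [hv1]
  have key2 : ((content σ (2*n, 0, (1:Fin 2)) : ZMod (2*n))) = (((n:ℤ)-1 : ℤ) : ZMod (2*n)) := by
    rw [hv2]; exact zmod_eq_of _ ⟨1, by push_cast; ring⟩
  have hAdd2 : Addable l (2*n, 0, (1:Fin 2)) := by
    constructor
    · show (l.partsOf 1).parts (2*n) = 0
      rw [hB]; split_ifs <;> omega
    · refine Or.inr ?_
      show 0 + 1 ≤ (l.partsOf 1).parts (2*n - 1)
      rw [hB]; split_ifs <;> omega
  have hAdd1 : Addable l (0, 1, (1:Fin 2)) := by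
    constructor
    · show (l.partsOf 1).parts 0 = 1
      rw [hB]; split_ifs <;> omega
    · exact Or.inl rfl
  have hAdd0 : Addable l (0, 0, (0:Fin 2)) := by
    constructor
    · show (l.partsOf 0).parts 0 = 0
      rw [hA]
    · exact Or.inl rfl
  have hRem : Removable l (2*n-1, 0, (1:Fin 2)) := by
    constructor
    · show (l.partsOf 1).parts (2*n-1) = 0 + 1
      rw [hB]; split_ifs <;> omega
    · show (l.partsOf 1).parts (2*n-1+1) ≤ 0
      rw [hB]; split_ifs <;> omega
  have hNAddR : ¬ Addable l (2*n-1, 0, (1:Fin 2)) := by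
    rintro ⟨h1, -⟩
    rw [show (l.partsOf (((2*n-1 : ℕ), (0:ℕ), (1:Fin 2)) : Box).2.2).parts
          (((2*n-1 : ℕ), (0:ℕ), (1:Fin 2)) : Box).1
        = (l.partsOf 1).parts (2*n-1) from rfl, hB] at h1
    split_ifs at h1 <;> omega
  have hs2 : signOf l (2*n, 0, (1:Fin 2)) = true := by unfold signOf; rw [if_pos hAdd2]
  have hs1 : signOf l (0, 1, (1:Fin 2)) = true := by unfold signOf; rw [if_pos hAdd1]
  have hs0 : signOf l (0, 0, (0:Fin 2)) = true := by unfold signOf; rw [if_pos hAdd0]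
  have hsR : signOf l (2*n-1, 0, (1:Fin 2)) = false := by unfold signOf; rw [if_neg hNAddR]
  have habs : ∀ a b : ℤ, a - b < (2*n:ℕ) → b - a < (2*n:ℕ) → |a - b| < ((2*n:ℕ):ℤ) := by
    intro a b h1 h2; rw [abs_sub_lt_iff]; exact ⟨h1, h2⟩
  unfold AnnihilatedE
  by_cases hN : i = (((n:ℤ) : ℤ) : ZMod (2*n))
  · refine ⟨[(2*n-1, 0, (1:Fin 2)), (0, 1, (1:Fin 2))], ⟨?_, ?_⟩, 0, ?_⟩
    · refine List.pairwise_cons.mpr ⟨?_, List.pairwise_singleton _ _⟩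
      intro b hb; rw [List.mem_singleton] at hb; subst hb
      exact Or.inl (by rw [hvR, hv1]; omega)
    · intro b
      rw [List.mem_cons, List.mem_singleton, classify2 n hn l hA hB]
      constructor
      · rintro (rfl | rfl)
        · exact ⟨Or.inr (Or.inl rfl), keyR.trans hN.symm⟩
        · exact ⟨Or.inr (Or.inr (Or.inl rfl)), key1.trans hN.symm⟩
      · rintro ⟨(rfl | rfl | rfl | rfl), hcl⟩
        · exfalso
          rw [key2, hN] at hcl
          have := zmod_inj (2*n) hcl (habs ((n:ℤ)-1) (n:ℤ) (by omega) (by omega))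
          omega
        · exact Or.inl rfl
        · exact Or.inr rfl
        · exfalso
          rw [key0, hN] at hcl
          have := zmod_inj (2*n) hcl (habs 0 (n:ℤ) (by omega) (by omega))
          omega
    · rw [show [((2*n-1 : ℕ), (0:ℕ), (1:Fin 2)), ((0:ℕ), (1:ℕ), (1:Fin 2))].map (signOf l)
          = [false, true] from by rw [List.map_cons, List.map_cons, List.map_nil, hsR, hs1]]
      exact Relation.ReflTransGen.single ⟨[], [], rfl, rfl⟩
  · by_cases h0 : i = (((0:ℤ)) : ZMod (2*n))
    · by_cases hn1 : n = 1
      · refine ⟨[(2*n, 0, (1:Fin 2)), (0, 0, (0:Fin 2))], ⟨?_, ?_⟩, 2, ?_⟩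
        · refine List.pairwise_cons.mpr ⟨?_, List.pairwise_singleton _ _⟩
          intro b hb; rw [List.mem_singleton] at hb; subst hb
          exact Or.inl (by rw [hv2, hv0]; omega)
        · intro b
          rw [List.mem_cons, List.mem_singleton, classify2 n hn l hA hB]
          constructor
          · rintro (rfl | rfl)
            · refine ⟨Or.inl rfl, ?_⟩
              rw [key2, h0, hn1]; norm_num
            · exact ⟨Or.inr (Or.inr (Or.inr rfl)), key0.trans h0.symm⟩
          · rintro ⟨(rfl | rfl | rfl | rfl), hcl⟩
            · exact Or.inl rfl
            · exact absurd (keyR.symm.trans hcl).symm hN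
            · exact absurd (key1.symm.trans hcl).symm hN
            · exact Or.inr rfl
        · rw [show [((2*n : ℕ), (0:ℕ), (1:Fin 2)), ((0:ℕ), (0:ℕ), (0:Fin 2))].map (signOf l)
              = [true, true] from by rw [List.map_cons, List.map_cons, List.map_nil, hs2, hs0]]
          exact Relation.ReflTransGen.refl
      · refine ⟨[(0, 0, (0:Fin 2))], ⟨List.pairwise_singleton _ _, ?_⟩, 1, ?_⟩
        · intro b
          rw [List.mem_singleton, classify2 n hn l hA hB]
          constructor
          · rintro rfl
            exact ⟨Or.inr (Or.inr (Or.inr rfl)), key0.trans h0.symm⟩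
          · rintro ⟨(rfl | rfl | rfl | rfl), hcl⟩
            · exfalso
              rw [key2, h0] at hcl
              have := zmod_inj (2*n) hcl (habs ((n:ℤ)-1) 0 (by omega) (by omega))
              omega
            · exact absurd (keyR.symm.trans hcl).symm hN
            · exact absurd (key1.symm.trans hcl).symm hN
            · rfl
        · rw [show [((0:ℕ), (0:ℕ), (0:Fin 2))].map (signOf l) = [true] from by
            rw [List.map_cons, List.map_nil, hs0]]
          exact Relation.ReflTransGen.refl
    · by_cases h3 : i = (((n:ℤ)-1 : ℤ) : ZMod (2*n))
      · refine ⟨[(2*n, 0, (1:Fin 2))], ⟨List.pairwise_singleton _ _, ?_⟩, 1, ?_⟩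
        · intro b
          rw [List.mem_singleton, classify2 n hn l hA hB]
          constructor
          · rintro rfl
            exact ⟨Or.inl rfl, key2.trans h3.symm⟩
          · rintro ⟨(rfl | rfl | rfl | rfl), hcl⟩
            · rfl
            · exact absurd (keyR.symm.trans hcl).symm hN
            · exact absurd (key1.symm.trans hcl).symm hN
            · exact absurd (key0.symm.trans hcl).symm h0
        · rw [show [((2*n : ℕ), (0:ℕ), (1:Fin 2))].map (signOf l) = [true] from by
            rw [List.map_cons, List.map_nil, hs2]]
          exact Relation.ReflTransGen.refl
      · refine ⟨[], ⟨List.Pairwise.nil, ?_⟩, 0, Relation.ReflTransGen.refl⟩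
        intro b
        rw [classify2 n hn l hA hB]
        simp only [List.not_mem_nil, false_iff]
        rintro ⟨(rfl | rfl | rfl | rfl), hcl⟩
        · exact absurd (key2.symm.trans hcl).symm h3
        · exact absurd (keyR.symm.trans hcl).symm hN
        · exact absurd (key1.symm.trans hcl).symm hN
        · exact absurd (key0.symm.trans hcl).symm h0

/-- With `d = 2n` and charge `s₀ = (0, n-1)`, every Kashiwara operator
`ẽ_i` annihilates the bipartitions `1^{2n}.∅` and `∅.1^{2n}`. -/
theorem decomposition_numbers_stmt9 (n : ℕ) (hn : 1 ≤ n) (i : ZMod (2 * n)) :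
    AnnihilatedE (bip (Multiset.replicate (2 * n) 1) 0) (0, (n : ℤ) - 1) (2 * n) i ∧
    AnnihilatedE (bip 0 (Multiset.replicate (2 * n) 1)) (0, (n : ℤ) - 1) (2 * n) i :=
  ⟨ann1 n hn i, ann2 n hn i⟩
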